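/- Let φ ∈ C(\overline{R₊}) be strictly decreasing with φ(0) = φ_b > 0 and lim_{x→∞} φ(x) = 0, and let f_∞ ∈ L¹(R³) be nonnegative with f_∞(ξ) = 0 for ξ₁ > 0. Define f(x,ξ) = f_∞(−√(ξ₁² − 2φ(x)), ξ') χ(ξ₁² − 2φ(x)) χ(−ξ₁). Then f ∈ C(\overline{R₊}; L¹(R³)), i.e., the map x ↦ f(x,·) is continuous from [0,∞) into L¹(R³), and ‖f(x,·) − f_∞‖_{L¹(R³)} → 0 as x → ∞. -/

import Mathlib

open MeasureTheory Real Set Filter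
open scoped ENNReal NNReal

noncomputable section

namespace TDC

lemma abs_w_le_one (c t : ℝ) (hc : 0 ≤ c) : |(-(t / Real.sqrt (t^2 + 2*c)))| ≤ 1 := by
  rcases eq_or_ne (Real.sqrt (t^2+2*c)) 0 with h | h
  · simp [h]
  · rw [abs_neg, abs_div, abs_of_nonneg (Real.sqrt_nonneg _),
      div_le_one ((Real.sqrt_nonneg _).lt_of_ne (Ne.symm h))]
    calc |t| = Real.sqrt (t^2) := (Real.sqrt_sq_eq_abs t).symm
    _ ≤ Real.sqrt (t^2+2*c) := Real.sqrt_le_sqrt (by linarith)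

lemma image_psi (c : ℝ) (hc : 0 ≤ c) :
    (fun t => -Real.sqrt (t^2 + 2*c)) '' (Iio 0) = Iio (-Real.sqrt (2*c)) := by
  ext u
  constructor
  · rintro ⟨t, ht, rfl⟩
    simp only [mem_Iio] at ht ⊢
    have : Real.sqrt (2*c) < Real.sqrt (t^2+2*c) :=
      Real.sqrt_lt_sqrt (by linarith) (by nlinarith)
    linarith
  · intro hu
    simp only [mem_Iio] at hu
    have h0 : 0 ≤ Real.sqrt (2*c) := Real.sqrt_nonneg _
    have hu0 : u < 0 := by linarith
    have hsq : 2*c < u^2 := by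
      have h2 := Real.sq_sqrt (by linarith : (0:ℝ) ≤ 2*c)
      nlinarith
    refine ⟨-Real.sqrt (u^2 - 2*c), ?_, ?_⟩
    · simpa only [mem_Iio, Left.neg_neg_iff] using Real.sqrt_pos.mpr (by linarith)
    · have h1 : (-Real.sqrt (u^2-2*c))^2 + 2*c = u^2 := by
        rw [neg_sq, Real.sq_sqrt (by linarith)]; ring
      simp only [h1, Real.sqrt_sq_eq_abs, abs_of_neg hu0, neg_neg]

lemma inj_psi (c : ℝ) (hc : 0 ≤ c) : InjOn (fun t => -Real.sqrt (t^2+2*c)) (Iio 0) := by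
  intro a ha b hb hab
  simp only [mem_Iio] at ha hb
  simp only [neg_inj] at hab
  have h2 : a^2 = b^2 := by
    have ha2 := Real.sq_sqrt (by nlinarith [sq_nonneg a] : (0:ℝ) ≤ a^2+2*c)
    have hb2 := Real.sq_sqrt (by nlinarith [sq_nonneg b] : (0:ℝ) ≤ b^2+2*c)
    rw [hab] at ha2
    linarith
  have : (a-b)*(a+b) = 0 := by nlinarith
  rcases mul_eq_zero.mp this with h | h
  · linarith
  · linarith

lemma deriv_psi (c : ℝ) {t : ℝ} (h : 0 < t^2 + 2*c) :
    HasDerivAt (fun t => -Real.sqrt (t^2+2*c)) (-(t / Real.sqrt (t^2+2*c))) t := by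
  have h1 : HasDerivAt (fun t : ℝ => t^2 + 2*c) (2*t) t := by
    simpa using (hasDerivAt_pow 2 t).add_const (2*c)
  have h2 := (Real.hasDerivAt_sqrt (ne_of_gt h)).comp t h1
  have hs : Real.sqrt (t^2+2*c) ≠ 0 := ne_of_gt (Real.sqrt_pos.mpr h)
  refine h2.neg.congr_deriv ?_
  field_simp

lemma cv_le (c : ℝ) (hc : 0 ≤ c) (k : ℝ → ℝ≥0∞) :
    ∫⁻ x in Iio (-Real.sqrt (2*c)), k (-Real.sqrt (x^2 - 2*c)) ≤ ∫⁻ t, k t := by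
  have hs : MeasurableSet (Iio (0:ℝ)) := measurableSet_Iio
  have hderiv : ∀ t ∈ Iio (0:ℝ), HasFDerivWithinAt (fun t => -Real.sqrt (t^2+2*c))
      (ContinuousLinearMap.smulRight (1 : ℝ →L[ℝ] ℝ) (-(t / Real.sqrt (t^2+2*c)))) (Iio 0) t := by
    intro t ht
    simp only [mem_Iio] at ht
    exact ((deriv_psi c (by nlinarith)).hasDerivWithinAt).hasFDerivWithinAt
  have hint := lintegral_image_eq_lintegral_abs_det_fderiv_mul volume hs hderiv (inj_psi c hc)
      (fun x => k (-Real.sqrt (x^2 - 2*c)))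
  rw [image_psi c hc] at hint
  rw [hint]
  simp only [ContinuousLinearMap.smulRight_one_eq_toSpanSingleton, ContinuousLinearMap.det_toSpanSingleton]
  have heq : ∀ᵐ t ∂volume, t ∈ Iio (0:ℝ) →
      ENNReal.ofReal |(-(t / Real.sqrt (t^2+2*c)))| *
        k (-Real.sqrt ((-Real.sqrt (t^2+2*c))^2 - 2*c)) =
      ENNReal.ofReal |(-(t / Real.sqrt (t^2+2*c)))| * k t := by
    filter_upwards with t ht
    simp only [mem_Iio] at ht
    have h1 : (-Real.sqrt (t^2+2*c))^2 - 2*c = t^2 := by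
      rw [neg_sq, Real.sq_sqrt (by positivity)]; ring
    rw [h1, Real.sqrt_sq_eq_abs, abs_of_neg ht, neg_neg]
  rw [setLIntegral_congr_fun_ae hs heq]
  calc ∫⁻ t in Iio (0:ℝ), ENNReal.ofReal |(-(t / Real.sqrt (t^2+2*c)))| * k t
      ≤ ∫⁻ t in Iio (0:ℝ), k t := by
        apply lintegral_mono
        intro t
        calc ENNReal.ofReal |(-(t / Real.sqrt (t^2+2*c)))| * k t ≤ 1 * k t :=
          mul_le_mul_left (ENNReal.ofReal_le_one.mpr (abs_w_le_one c t hc)) _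
        _ = k t := one_mul _
    _ ≤ ∫⁻ t, k t := lintegral_mono' Measure.restrict_le_self le_rfl


abbrev Rset (c : ℝ) : Set (ℝ×ℝ×ℝ) := Iio (-Real.sqrt (2*c)) ×ˢ (univ : Set (ℝ×ℝ))

lemma Rset_meas (c : ℝ) : MeasurableSet (Rset c) := measurableSet_Iio.prod MeasurableSet.univ

lemma key_bound (c : ℝ) (hc : 0 ≤ c) (G : ℝ×ℝ×ℝ → ℝ≥0∞) (hG : Measurable G) :
    ∫⁻ ξ, (Rset c).indicator (fun ξ => G (-Real.sqrt (ξ.1^2 - 2*c), ξ.2)) ξ ≤ ∫⁻ ζ, G ζ := by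
  rw [lintegral_indicator (Rset_meas c) _]
  have hΦ : Measurable (fun ξ : ℝ×ℝ×ℝ => ((-Real.sqrt (ξ.1^2 - 2*c), ξ.2) : ℝ×ℝ×ℝ)) := by
    fun_prop
  have hres : (volume : Measure (ℝ×ℝ×ℝ)).restrict (Rset c) =
      ((volume : Measure ℝ).restrict (Iio (-Real.sqrt (2*c)))).prod (volume : Measure (ℝ×ℝ)) := by
    rw [Measure.volume_eq_prod, ← Measure.prod_restrict, Measure.restrict_univ]
  rw [hres]
  rw [lintegral_prod (fun a : ℝ×ℝ×ℝ => G (-Real.sqrt (a.1^2 - 2*c), a.2)) ((hG.comp hΦ).aemeasurable)]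
  have hk : ∀ x : ℝ, ∫⁻ y : ℝ×ℝ, G (-Real.sqrt (x^2 - 2*c), y) =
      (fun t => ∫⁻ y : ℝ×ℝ, G (t, y)) (-Real.sqrt (x^2 - 2*c)) := fun x => rfl
  calc ∫⁻ x in Iio (-Real.sqrt (2*c)), ∫⁻ y : ℝ×ℝ, G (-Real.sqrt (x^2 - 2*c), y)
      = ∫⁻ x in Iio (-Real.sqrt (2*c)), (fun t => ∫⁻ y : ℝ×ℝ, G (t, y)) (-Real.sqrt (x^2 - 2*c)) := rfl
    _ ≤ ∫⁻ t, (fun t => ∫⁻ y : ℝ×ℝ, G (t, y)) t := cv_le c hc _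
    _ = ∫⁻ t, ∫⁻ y : ℝ×ℝ, G (t, y) := rfl
    _ = ∫⁻ ζ, G ζ := by
        rw [← lintegral_prod G (by rw [← Measure.volume_eq_prod]; exact hG.aemeasurable),
          ← Measure.volume_eq_prod]

def Fc (h : ℝ×ℝ×ℝ → ℝ) (c : ℝ) : ℝ×ℝ×ℝ → ℝ := fun ξ =>
  h (-Real.sqrt (ξ.1 ^ 2 - 2 * c), ξ.2) * (if 0 < ξ.1 ^ 2 - 2 * c then (1:ℝ) else 0) *
    (if 0 < -ξ.1 then (1:ℝ) else 0)

lemma mem_iff {c : ℝ} (hc : 0 ≤ c) (x : ℝ) :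
    x < -Real.sqrt (2*c) ↔ (0 < x^2 - 2*c ∧ 0 < -x) := by
  have h0 : 0 ≤ Real.sqrt (2*c) := Real.sqrt_nonneg _
  have h2 := Real.sq_sqrt (by linarith : (0:ℝ) ≤ 2*c)
  constructor
  · intro h
    have hx : x < 0 := by linarith
    exact ⟨by nlinarith, by linarith⟩
  · rintro ⟨h1, h2'⟩
    have hx : x < 0 := by linarith
    have h3 : Real.sqrt (2*c) < Real.sqrt (x^2) :=
      Real.sqrt_lt_sqrt (by linarith) (by nlinarith)
    rw [Real.sqrt_sq_eq_abs, abs_of_neg hx] at h3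
    linarith

lemma Fc_eq_indicator (h : ℝ×ℝ×ℝ → ℝ) {c : ℝ} (hc : 0 ≤ c) :
    Fc h c = (Rset c).indicator (fun ξ => h (-Real.sqrt (ξ.1^2 - 2*c), ξ.2)) := by
  funext ξ
  by_cases hξ : ξ ∈ Rset c
  · have hmem : ξ.1 < -Real.sqrt (2*c) := hξ.1
    obtain ⟨h1, h2⟩ := (mem_iff hc ξ.1).mp hmem
    rw [indicator_of_mem hξ]
    simp [Fc, h1, h2]
  · rw [indicator_of_notMem hξ]
    have hnot : ¬(0 < ξ.1^2-2*c ∧ 0 < -ξ.1) := by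
      intro hcon
      exact hξ (by exact ⟨(mem_iff hc ξ.1).mpr hcon, mem_univ _⟩)
    by_cases h1 : 0 < ξ.1^2 - 2*c
    · have h2 : ¬ 0 < -ξ.1 := fun h2 => hnot ⟨h1, h2⟩
      simp [Fc, h2]
    · simp [Fc, h1]

lemma measurable_Fc (h : ℝ×ℝ×ℝ → ℝ) (hm : Measurable h) (c : ℝ) : Measurable (Fc h c) := by
  have hΦ : Measurable (fun ξ : ℝ×ℝ×ℝ => ((-Real.sqrt (ξ.1^2 - 2*c), ξ.2) : ℝ×ℝ×ℝ)) := by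
    fun_prop
  have h1 : MeasurableSet {ξ : ℝ×ℝ×ℝ | 0 < ξ.1^2 - 2*c} :=
    measurableSet_lt measurable_const (by fun_prop)
  have h2 : MeasurableSet {ξ : ℝ×ℝ×ℝ | 0 < -ξ.1} :=
    measurableSet_lt measurable_const (by fun_prop)
  exact ((hm.comp hΦ).mul (Measurable.ite h1 measurable_const measurable_const)).mul
    (Measurable.ite h2 measurable_const measurable_const)

lemma ofReal_abs_Fc (h : ℝ×ℝ×ℝ → ℝ) {c : ℝ} (hc : 0 ≤ c) :
    (fun ξ => ENNReal.ofReal |Fc h c ξ|) =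
      (Rset c).indicator (fun ξ => ENNReal.ofReal |h (-Real.sqrt (ξ.1^2 - 2*c), ξ.2)|) := by
  rw [Fc_eq_indicator h hc]
  funext ξ
  by_cases hξ : ξ ∈ Rset c <;> simp [hξ]

lemma lintegral_abs_Fc_le (h : ℝ×ℝ×ℝ → ℝ) (hm : Measurable h) {c : ℝ} (hc : 0 ≤ c) :
    ∫⁻ ξ, ENNReal.ofReal |Fc h c ξ| ≤ ∫⁻ ζ, ENNReal.ofReal |h ζ| := by
  rw [ofReal_abs_Fc h hc]
  exact key_bound c hc (fun ζ => ENNReal.ofReal |h ζ|) (by fun_prop)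

lemma integrable_Fc (h : ℝ×ℝ×ℝ → ℝ) (hm : Measurable h) (hi : Integrable h) {c : ℝ}
    (hc : 0 ≤ c) : Integrable (Fc h c) := by
  refine ⟨(measurable_Fc h hm c).aestronglyMeasurable, ?_⟩
  rw [hasFiniteIntegral_iff_norm]
  have h1 := lintegral_abs_Fc_le h hm hc
  simp only [Real.norm_eq_abs]
  apply lt_of_le_of_lt h1
  have := hi.hasFiniteIntegral
  rw [hasFiniteIntegral_iff_norm] at this
  simpa only [Real.norm_eq_abs] using this

lemma integral_abs_Fc_le (h : ℝ×ℝ×ℝ → ℝ) (hm : Measurable h) (hi : Integrable h) {c : ℝ}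
    (hc : 0 ≤ c) : ∫ ξ, |Fc h c ξ| ≤ ∫ ζ, |h ζ| := by
  rw [integral_eq_lintegral_of_nonneg_ae (Eventually.of_forall fun _ => abs_nonneg _)
      ((measurable_Fc h hm c).abs.aestronglyMeasurable),
    integral_eq_lintegral_of_nonneg_ae (Eventually.of_forall fun _ => abs_nonneg _)
      (hm.abs.aestronglyMeasurable)]
  apply ENNReal.toReal_mono
  · have := hi.hasFiniteIntegral
    rw [hasFiniteIntegral_iff_norm] at this
    simpa only [Real.norm_eq_abs] using this.ne
  · exact lintegral_abs_Fc_le h hm hc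

lemma Fc_congr_ae {h₁ h₂ : ℝ×ℝ×ℝ → ℝ} (hae : h₁ =ᵐ[volume] h₂) {c : ℝ} (hc : 0 ≤ c) :
    Fc h₁ c =ᵐ[volume] Fc h₂ c := by
  have hnull : volume {ζ : ℝ×ℝ×ℝ | h₁ ζ ≠ h₂ ζ} = 0 := hae
  obtain ⟨N, hsub, hNm, hN0⟩ := exists_measurable_superset_of_null hnull
  have key := key_bound c hc (N.indicator 1) (measurable_one.indicator hNm)
  have hrhs : ∫⁻ ζ, N.indicator (1 : (ℝ×ℝ×ℝ) → ℝ≥0∞) ζ = 0 := by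
    rw [lintegral_indicator hNm _]
    simp only [Pi.one_apply]
    rw [setLIntegral_one, hN0]
  rw [hrhs, le_zero_iff] at key
  have hlhs : (fun ξ => (Rset c).indicator
      (fun ξ => N.indicator (1 : (ℝ×ℝ×ℝ) → ℝ≥0∞) ((-Real.sqrt (ξ.1^2 - 2*c), ξ.2) : ℝ×ℝ×ℝ)) ξ) =
      (Rset c ∩ (fun ξ : ℝ×ℝ×ℝ => ((-Real.sqrt (ξ.1^2 - 2*c), ξ.2) : ℝ×ℝ×ℝ)) ⁻¹' N).indicator 1 := by
    funext ξ
    by_cases h1 : ξ ∈ Rset c <;> by_cases h2 : ((-Real.sqrt (ξ.1^2 - 2*c), ξ.2) : ℝ×ℝ×ℝ) ∈ N <;>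
      simp [h1, h2, indicator_of_mem, indicator_of_notMem]
  rw [hlhs] at key
  have hΦ : Measurable (fun ξ : ℝ×ℝ×ℝ => ((-Real.sqrt (ξ.1^2 - 2*c), ξ.2) : ℝ×ℝ×ℝ)) := by
    fun_prop
  rw [lintegral_indicator_one ((Rset_meas c).inter (hΦ hNm))] at key
  rw [Filter.eventuallyEq_iff_exists_mem]
  refine ⟨(Rset c ∩ (fun ξ : ℝ×ℝ×ℝ => ((-Real.sqrt (ξ.1^2 - 2*c), ξ.2) : ℝ×ℝ×ℝ)) ⁻¹' N)ᶜ, ?_, ?_⟩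
  · rw [mem_ae_iff, compl_compl]; exact key
  · intro ξ hξ
    simp only [mem_compl_iff, mem_inter_iff, not_and, mem_preimage] at hξ
    rw [Fc_eq_indicator h₁ hc, Fc_eq_indicator h₂ hc]
    by_cases h1 : ξ ∈ Rset c
    · rw [indicator_of_mem h1, indicator_of_mem h1]
      have : ((-Real.sqrt (ξ.1^2 - 2*c), ξ.2) : ℝ×ℝ×ℝ) ∉ N := hξ h1
      have hne : h₁ ((-Real.sqrt (ξ.1^2 - 2*c), ξ.2) : ℝ×ℝ×ℝ) =
          h₂ ((-Real.sqrt (ξ.1^2 - 2*c), ξ.2) : ℝ×ℝ×ℝ) := by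
        by_contra hcon
        exact this (hsub hcon)
      exact hne
    · rw [indicator_of_notMem h1, indicator_of_notMem h1]


lemma tendsto_Fc_of_cont (g : ℝ×ℝ×ℝ → ℝ) (hg : Continuous g) (hgs : HasCompactSupport g)
    {c₀ : ℝ} (hc₀ : 0 ≤ c₀) :
    Tendsto (fun c => ∫ ξ : ℝ×ℝ×ℝ, |Fc g c ξ - Fc g c₀ ξ|) (nhdsWithin c₀ (Ici 0)) (nhds 0) := by
  obtain ⟨r, hrsub⟩ := hgs.isBounded.subset_closedBall 0
  set R : ℝ := max r 1 with hRdef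
  have hR0 : 0 < R := lt_of_lt_of_le one_pos (le_max_right _ _)
  have hRsub : tsupport g ⊆ Metric.closedBall 0 R :=
    hrsub.trans (Metric.closedBall_subset_closedBall (le_max_left _ _))
  obtain ⟨M, hM⟩ := hgs.exists_bound_of_continuous hg
  simp only [Real.norm_eq_abs] at hM
  have hM0 : 0 ≤ M := le_trans (abs_nonneg _) (hM 0)
  set A : ℝ := Real.sqrt (R^2 + 2*c₀ + 2) with hAdef
  set B : Set (ℝ×ℝ×ℝ) := Icc (-A) A ×ˢ (Icc (-R) R ×ˢ Icc (-R) R) with hBdef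
  have hBmeas : MeasurableSet B :=
    measurableSet_Icc.prod (measurableSet_Icc.prod measurableSet_Icc)
  have hBcomp : IsCompact B := (isCompact_Icc.prod (isCompact_Icc.prod isCompact_Icc))
  have hboundint : Integrable (B.indicator fun _ => 2*M) := by
    rw [integrable_indicator_iff hBmeas]
    exact integrableOn_const hBcomp.measure_lt_top.ne
  have hvanish : ∀ c' ∈ Icc (0:ℝ) (c₀+1), ∀ ξ : ℝ×ℝ×ℝ, ξ ∉ B → Fc g c' ξ = 0 := by
    intro c' hc' ξ hξ
    by_contra hne
    have h1 : 0 < ξ.1^2 - 2*c' := by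
      by_contra h; simp only [Fc, if_neg h, mul_zero, zero_mul] at hne; exact hne trivial
    have h2 : 0 < -ξ.1 := by
      by_contra h; simp only [Fc, if_neg h, mul_zero] at hne; exact hne trivial
    have h3 : g ((-Real.sqrt (ξ.1^2-2*c'), ξ.2) : ℝ×ℝ×ℝ) ≠ 0 := by
      intro h
      simp only [Fc] at hne
      rw [show ξ.1 ^ 2 - 2 * c' = ξ.1^2 - 2*c' from rfl, h, zero_mul, zero_mul] at hne
      exact hne rfl
    set z : ℝ×ℝ×ℝ := ((-Real.sqrt (ξ.1^2-2*c'), ξ.2) : ℝ×ℝ×ℝ) with hzdef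
    have hmem : z ∈ tsupport g := subset_tsupport g (by simpa using h3)
    have hball := hRsub hmem
    rw [Metric.mem_closedBall, dist_zero_right] at hball
    have e1 : |z.1| ≤ R := by rw [← Real.norm_eq_abs]; exact (norm_fst_le z).trans hball
    have e2 : |ξ.2.1| ≤ R := by
      rw [← Real.norm_eq_abs]
      exact le_trans (le_trans (norm_fst_le z.2) (norm_snd_le z)) hball
    have e3 : |ξ.2.2| ≤ R := by
      rw [← Real.norm_eq_abs]
      exact le_trans (le_trans (norm_snd_le z.2) (norm_snd_le z)) hball
    have e4 : Real.sqrt (ξ.1^2 - 2*c') ≤ R := by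
      have : z.1 = -Real.sqrt (ξ.1^2-2*c') := rfl
      rwa [this, abs_neg, abs_of_nonneg (Real.sqrt_nonneg _)] at e1
    have e5 : ξ.1^2 - 2*c' ≤ R^2 := by
      have hss := Real.sq_sqrt (le_of_lt h1)
      nlinarith [Real.sqrt_nonneg (ξ.1^2 - 2*c')]
    have e6 : ξ.1^2 ≤ A^2 := by
      have hA2 : A^2 = R^2 + 2*c₀ + 2 := Real.sq_sqrt (by positivity)
      nlinarith [hc'.1, hc'.2]
    have e7 : |ξ.1| ≤ A := by
      calc |ξ.1| = Real.sqrt (ξ.1^2) := (Real.sqrt_sq_eq_abs _).symm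
      _ ≤ Real.sqrt (A^2) := Real.sqrt_le_sqrt e6
      _ = A := Real.sqrt_sq (Real.sqrt_nonneg _)
    exact hξ ⟨mem_Icc.mpr (abs_le.mp e7),
      mem_Icc.mpr (abs_le.mp e2), mem_Icc.mpr (abs_le.mp e3)⟩
  have habs : ∀ (c' : ℝ) (ξ : ℝ×ℝ×ℝ), |Fc g c' ξ| ≤ M := by
    intro c' ξ
    simp only [Fc]
    split_ifs with h1 h2
    · simpa using hM _
    all_goals simpa using hM0
  have key := tendsto_integral_filter_of_dominated_convergence (μ := volume)
      (l := nhdsWithin c₀ (Ici 0)) (F := fun c ξ => |Fc g c ξ - Fc g c₀ ξ|)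
      (f := fun _ => (0:ℝ)) (B.indicator fun _ => 2*M)
      (Eventually.of_forall fun c =>
        ((measurable_Fc g hg.measurable c).sub (measurable_Fc g hg.measurable c₀)).abs.aestronglyMeasurable)
      ?_ hboundint ?_
  · simpa using key
  · -- bound
    have hIoo : ∀ᶠ c in nhdsWithin c₀ (Ici 0), c ∈ Icc (0:ℝ) (c₀+1) := by
      have h2 : Ioo (c₀-1) (c₀+1) ∈ nhds c₀ := Ioo_mem_nhds (by linarith) (by linarith)
      filter_upwards [self_mem_nhdsWithin, nhdsWithin_le_nhds h2] with c hx1 hx2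
      exact ⟨hx1, le_of_lt hx2.2⟩
    filter_upwards [hIoo] with c hc
    apply Eventually.of_forall
    intro ξ
    rw [Real.norm_eq_abs, abs_abs]
    by_cases hξ : ξ ∈ B
    · rw [indicator_of_mem hξ]
      have htri : |Fc g c ξ - Fc g c₀ ξ| ≤ |Fc g c ξ| + |Fc g c₀ ξ| := by
        have := abs_add_le (Fc g c ξ) (-(Fc g c₀ ξ))
        rw [abs_neg] at this
        simpa [sub_eq_add_neg] using this
      calc |Fc g c ξ - Fc g c₀ ξ| ≤ |Fc g c ξ| + |Fc g c₀ ξ| := htri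
      _ ≤ M + M := add_le_add (habs c ξ) (habs c₀ ξ)
      _ = 2*M := by ring
    · rw [indicator_of_notMem hξ, hvanish c hc ξ hξ,
        hvanish c₀ ⟨hc₀, by linarith⟩ ξ hξ]
      simp
  · -- pointwise limit
    have hZ : volume {ξ : ℝ×ℝ×ℝ | ξ.1^2 = 2*c₀} = 0 := by
      have hsub : {ξ : ℝ×ℝ×ℝ | ξ.1^2 = 2*c₀} ⊆
          ({-Real.sqrt (2*c₀), Real.sqrt (2*c₀)} : Set ℝ) ×ˢ (univ : Set (ℝ×ℝ)) := by
        intro ξ hξ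
        simp only [mem_setOf_eq] at hξ
        refine ⟨?_, mem_univ _⟩
        have habs : |ξ.1| = Real.sqrt (2*c₀) := by
          rw [← Real.sqrt_sq_eq_abs, hξ]
        rcases (abs_eq (Real.sqrt_nonneg (2*c₀))).mp habs with h | h
        · right; exact h
        · left; exact h
      apply measure_mono_null hsub
      rw [Measure.volume_eq_prod, Measure.prod_prod]
      have hfin : volume ({-Real.sqrt (2*c₀), Real.sqrt (2*c₀)} : Set ℝ) = 0 :=
        ((Set.finite_singleton _).insert _).measure_zero _
      rw [hfin, zero_mul]
    filter_upwards [measure_eq_zero_iff_ae_notMem.mp hZ] with ξ hξm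
    have hξ : ξ.1^2 ≠ 2*c₀ := hξm
    by_cases h2 : 0 < -ξ.1
    · rcases (sub_ne_zero.mpr hξ).lt_or_gt with hlt | hgt
      · have hcont : Tendsto (fun c : ℝ => ξ.1^2 - 2*c) (nhds c₀) (nhds (ξ.1^2 - 2*c₀)) :=
          (continuous_const.sub (continuous_const.mul continuous_id)).tendsto c₀
        have hev : ∀ᶠ c in nhdsWithin c₀ (Ici 0), ξ.1^2 - 2*c < 0 :=
          nhdsWithin_le_nhds (hcont (Iio_mem_nhds hlt))
        apply Tendsto.congr' _ (tendsto_const_nhds (α := ℝ))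
        · filter_upwards [hev] with c hcc
          have hc1 : Fc g c ξ = 0 := by
            simp only [Fc, if_neg (not_lt.mpr (le_of_lt hcc)), mul_zero, zero_mul]
          have hc2 : Fc g c₀ ξ = 0 := by
            simp only [Fc, if_neg (not_lt.mpr (le_of_lt hlt)), mul_zero, zero_mul]
          rw [hc1, hc2, sub_zero, abs_zero]
      · have hcont : Tendsto (fun c : ℝ => ξ.1^2 - 2*c) (nhds c₀) (nhds (ξ.1^2 - 2*c₀)) :=
          (continuous_const.sub (continuous_const.mul continuous_id)).tendsto c₀
        have hev : ∀ᶠ c in nhdsWithin c₀ (Ici 0), 0 < ξ.1^2 - 2*c :=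
          nhdsWithin_le_nhds (hcont (Ioi_mem_nhds hgt))
        have hcc : Continuous (fun c : ℝ => ((-Real.sqrt (ξ.1^2 - 2*c), ξ.2) : ℝ×ℝ×ℝ)) := by
          fun_prop
        have hgc : Tendsto (fun c : ℝ => g ((-Real.sqrt (ξ.1^2 - 2*c), ξ.2) : ℝ×ℝ×ℝ))
            (nhds c₀) (nhds (g ((-Real.sqrt (ξ.1^2 - 2*c₀), ξ.2) : ℝ×ℝ×ℝ))) :=
          (hg.tendsto _).comp (hcc.tendsto c₀)
        have h0 : Tendsto (fun c : ℝ => |g ((-Real.sqrt (ξ.1^2 - 2*c), ξ.2) : ℝ×ℝ×ℝ) -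
            g ((-Real.sqrt (ξ.1^2 - 2*c₀), ξ.2) : ℝ×ℝ×ℝ)|) (nhds c₀) (nhds 0) := by
          have hsub : Tendsto (fun c : ℝ => g ((-Real.sqrt (ξ.1^2 - 2*c), ξ.2) : ℝ×ℝ×ℝ) -
              g ((-Real.sqrt (ξ.1^2 - 2*c₀), ξ.2) : ℝ×ℝ×ℝ)) (nhds c₀)
              (nhds (g ((-Real.sqrt (ξ.1^2 - 2*c₀), ξ.2) : ℝ×ℝ×ℝ) -
                g ((-Real.sqrt (ξ.1^2 - 2*c₀), ξ.2) : ℝ×ℝ×ℝ))) := hgc.sub tendsto_const_nhds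
          have habs2 := hsub.abs
          simpa using habs2
        apply Tendsto.congr' _ (h0.mono_left nhdsWithin_le_nhds)
        filter_upwards [hev] with c hcc2
        have hc1 : Fc g c ξ = g ((-Real.sqrt (ξ.1^2 - 2*c), ξ.2) : ℝ×ℝ×ℝ) := by
          simp only [Fc, if_pos hcc2, if_pos h2, mul_one]
        have hc2 : Fc g c₀ ξ = g ((-Real.sqrt (ξ.1^2 - 2*c₀), ξ.2) : ℝ×ℝ×ℝ) := by
          simp only [Fc, if_pos hgt, if_pos h2, mul_one]
        rw [hc1, hc2]
    · apply Tendsto.congr' _ (tendsto_const_nhds (α := ℝ))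
      apply Eventually.of_forall
      intro c
      simp only [Fc, if_neg h2, mul_zero, sub_zero, abs_zero]


lemma Fc_split (h g : ℝ×ℝ×ℝ → ℝ) (c : ℝ) (ξ : ℝ×ℝ×ℝ) :
    Fc h c ξ = Fc (fun ζ => h ζ - g ζ) c ξ + Fc g c ξ := by
  simp only [Fc]; ring

lemma tendsto_Fc (h : ℝ×ℝ×ℝ → ℝ) (hm : Measurable h) (hi : Integrable h) {c₀ : ℝ}
    (hc₀ : 0 ≤ c₀) :
    Tendsto (fun c => ∫ ξ : ℝ×ℝ×ℝ, |Fc h c ξ - Fc h c₀ ξ|) (nhdsWithin c₀ (Ici 0)) (nhds 0) := by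
  rw [Metric.tendsto_nhds]
  intro ε hε
  obtain ⟨g, hgsupp, hgL1, hgcont, hgint⟩ :=
    hi.exists_hasCompactSupport_integral_sub_le (show (0:ℝ) < ε/4 by linarith)
  simp only [Real.norm_eq_abs] at hgL1
  have hdct := tendsto_Fc_of_cont g hgcont hgsupp hc₀
  have hev := (Metric.tendsto_nhds.mp hdct) (ε/4) (by linarith)
  filter_upwards [hev, self_mem_nhdsWithin] with c hc1 hc2
  have hc2' : (0:ℝ) ≤ c := hc2
  rw [Real.dist_eq, sub_zero] at hc1 ⊢
  set d : ℝ×ℝ×ℝ → ℝ := fun ζ => h ζ - g ζ with hd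
  have hd_m : Measurable d := hm.sub hgcont.measurable
  have hd_i : Integrable d := hi.sub hgint
  have I1 : Integrable (Fc d c) := integrable_Fc d hd_m hd_i hc2'
  have I2 : Integrable (Fc d c₀) := integrable_Fc d hd_m hd_i hc₀
  have I3 : Integrable (Fc g c) := integrable_Fc g hgcont.measurable hgint hc2'
  have I4 : Integrable (Fc g c₀) := integrable_Fc g hgcont.measurable hgint hc₀
  have Ih : Integrable (Fc h c) := integrable_Fc h hm hi hc2'
  have Ih₀ : Integrable (Fc h c₀) := integrable_Fc h hm hi hc₀
  have hptw : ∀ ξ, |Fc h c ξ - Fc h c₀ ξ| ≤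
      |Fc d c ξ| + (|Fc g c ξ - Fc g c₀ ξ| + |Fc d c₀ ξ|) := by
    intro ξ
    rw [Fc_split h g c ξ, Fc_split h g c₀ ξ]
    have e1 : Fc d c ξ + Fc g c ξ - (Fc d c₀ ξ + Fc g c₀ ξ) =
        Fc d c ξ + ((Fc g c ξ - Fc g c₀ ξ) + -(Fc d c₀ ξ)) := by ring
    rw [e1]
    calc |Fc d c ξ + ((Fc g c ξ - Fc g c₀ ξ) + -(Fc d c₀ ξ))|
        ≤ |Fc d c ξ| + |(Fc g c ξ - Fc g c₀ ξ) + -(Fc d c₀ ξ)| := abs_add_le _ _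
      _ ≤ |Fc d c ξ| + (|Fc g c ξ - Fc g c₀ ξ| + |-(Fc d c₀ ξ)|) :=
          add_le_add_right (abs_add_le _ _) _
      _ = |Fc d c ξ| + (|Fc g c ξ - Fc g c₀ ξ| + |Fc d c₀ ξ|) := by rw [abs_neg]
  have J1 : Integrable (fun ξ : ℝ×ℝ×ℝ => |Fc d c ξ|) := I1.abs
  have J2 : Integrable (fun ξ : ℝ×ℝ×ℝ => |Fc d c₀ ξ|) := I2.abs
  have J3 : Integrable (fun ξ : ℝ×ℝ×ℝ => |Fc g c ξ - Fc g c₀ ξ|) := (I3.sub I4).abs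
  have J0 : Integrable (fun ξ : ℝ×ℝ×ℝ => |Fc h c ξ - Fc h c₀ ξ|) := (Ih.sub Ih₀).abs
  have hint1 : ∫ ξ : ℝ×ℝ×ℝ, |Fc h c ξ - Fc h c₀ ξ| ≤
      ∫ ξ : ℝ×ℝ×ℝ, (|Fc d c ξ| + (|Fc g c ξ - Fc g c₀ ξ| + |Fc d c₀ ξ|)) := by
    have J132 : Integrable (fun ξ : ℝ×ℝ×ℝ => |Fc d c ξ| + (|Fc g c ξ - Fc g c₀ ξ| + |Fc d c₀ ξ|)) :=
      J1.add (J3.add J2)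
    exact integral_mono J0 J132 hptw
  have hint2 : ∫ ξ : ℝ×ℝ×ℝ, (|Fc d c ξ| + (|Fc g c ξ - Fc g c₀ ξ| + |Fc d c₀ ξ|)) =
      (∫ ξ : ℝ×ℝ×ℝ, |Fc d c ξ|) + ((∫ ξ : ℝ×ℝ×ℝ, |Fc g c ξ - Fc g c₀ ξ|) +
        ∫ ξ : ℝ×ℝ×ℝ, |Fc d c₀ ξ|) := by
    have J32 : Integrable (fun ξ : ℝ×ℝ×ℝ => |Fc g c ξ - Fc g c₀ ξ| + |Fc d c₀ ξ|) := J3.add J2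
    rw [integral_add J1 J32, integral_add J3 J2]
  have b1 : ∫ ξ : ℝ×ℝ×ℝ, |Fc d c ξ| ≤ ε/4 :=
    le_trans (integral_abs_Fc_le d hd_m hd_i hc2') hgL1
  have b2 : ∫ ξ : ℝ×ℝ×ℝ, |Fc d c₀ ξ| ≤ ε/4 :=
    le_trans (integral_abs_Fc_le d hd_m hd_i hc₀) hgL1
  have b3 : ∫ ξ : ℝ×ℝ×ℝ, |Fc g c ξ - Fc g c₀ ξ| < ε/4 :=
    lt_of_abs_lt hc1
  have hnonneg : 0 ≤ ∫ ξ : ℝ×ℝ×ℝ, |Fc h c ξ - Fc h c₀ ξ| :=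
    integral_nonneg fun ξ => abs_nonneg _
  rw [abs_of_nonneg hnonneg]
  calc ∫ ξ : ℝ×ℝ×ℝ, |Fc h c ξ - Fc h c₀ ξ| ≤ _ := hint1
    _ = _ := hint2
    _ < ε := by linarith

lemma tendsto_Fc' (h : ℝ×ℝ×ℝ → ℝ) (hi : Integrable h) {c₀ : ℝ} (hc₀ : 0 ≤ c₀) :
    Tendsto (fun c => ∫ ξ : ℝ×ℝ×ℝ, |Fc h c ξ - Fc h c₀ ξ|) (nhdsWithin c₀ (Ici 0)) (nhds 0) := by
  set h₀ : ℝ×ℝ×ℝ → ℝ := hi.1.mk h with hh₀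
  have hae : h =ᵐ[volume] h₀ := hi.1.ae_eq_mk
  have hm₀ : Measurable h₀ := hi.1.stronglyMeasurable_mk.measurable
  have hi₀ : Integrable h₀ := hi.congr hae
  apply Tendsto.congr' _ (tendsto_Fc h₀ hm₀ hi₀ hc₀)
  filter_upwards [self_mem_nhdsWithin] with c hc
  apply integral_congr_ae
  filter_upwards [Fc_congr_ae hae hc, Fc_congr_ae hae hc₀] with ξ e1 e2
  rw [e1, e2]

lemma integrable_Fc' (h : ℝ×ℝ×ℝ → ℝ) (hi : Integrable h) {c : ℝ} (hc : 0 ≤ c) :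
    Integrable (Fc h c) := by
  have hae : h =ᵐ[volume] hi.1.mk h := hi.1.ae_eq_mk
  exact (integrable_Fc _ hi.1.stronglyMeasurable_mk.measurable (hi.congr hae) hc).congr
    (Fc_congr_ae hae.symm hc)

lemma Fc_zero_ae (h : ℝ×ℝ×ℝ → ℝ) (hvan : ∀ ξ : ℝ×ℝ×ℝ, 0 < ξ.1 → h ξ = 0) :
    Fc h 0 =ᵐ[volume] h := by
  have hZ : volume {ξ : ℝ×ℝ×ℝ | ξ.1 = 0} = 0 := by
    have hsub : {ξ : ℝ×ℝ×ℝ | ξ.1 = 0} ⊆ ({0} : Set ℝ) ×ˢ (univ : Set (ℝ×ℝ)) := by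
      intro ξ hξ; exact ⟨hξ, mem_univ _⟩
    apply measure_mono_null hsub
    rw [Measure.volume_eq_prod, Measure.prod_prod, Real.volume_singleton, zero_mul]
  filter_upwards [measure_eq_zero_iff_ae_notMem.mp hZ] with ξ hξm
  have hξ : ξ.1 ≠ 0 := hξm
  rcases hξ.lt_or_gt with hlt | hgt
  · have h1 : (0:ℝ) < ξ.1^2 - 2*0 := by nlinarith
    have h2 : 0 < -ξ.1 := by linarith
    have key : ((-Real.sqrt (ξ.1^2 - 2*0), ξ.2) : ℝ×ℝ×ℝ) = ξ := by
      have e : ξ.1^2 - 2*0 = ξ.1^2 := by ring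
      rw [e, Real.sqrt_sq_eq_abs, abs_of_neg hlt, neg_neg]
    simp only [Fc, if_pos h1, if_pos h2, mul_one]
    rw [show ξ.1 ^ 2 - 2 * 0 = ξ.1^2 - 2*0 from rfl, key]
  · have h2 : ¬ (0 < -ξ.1) := by simp; linarith
    simp only [Fc, if_neg h2, mul_zero]
    exact (hvan ξ hgt).symm


end TDC

end

open TDC in
theorem transported_density_continuity (φ_b : ℝ) (hφb : 0 < φ_b)
    (φ : ℝ → ℝ) (hφcont : ContinuousOn φ (Ici 0))
    (hφanti : StrictAntiOn φ (Ici 0))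
    (hφ0 : φ 0 = φ_b)
    (hφlim : Tendsto φ atTop (nhds 0))
    (f_inf : ℝ × ℝ × ℝ → ℝ) (hfint : Integrable f_inf) (hf0 : ∀ ξ, 0 ≤ f_inf ξ)
    (hfvan : ∀ ξ : ℝ × ℝ × ℝ, 0 < ξ.1 → f_inf ξ = 0)
    (f : ℝ → ℝ × ℝ × ℝ → ℝ)
    (hf : f = fun x ξ =>
      f_inf (-Real.sqrt (ξ.1 ^ 2 - 2 * φ x), ξ.2) *
        (if 0 < ξ.1 ^ 2 - 2 * φ x then (1:ℝ) else 0) *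
        (if 0 < -ξ.1 then (1:ℝ) else 0)) :
    (∀ x ∈ Ici (0:ℝ), Integrable (f x)) ∧
    (∀ x₀ ∈ Ici (0:ℝ),
      Tendsto (fun x => ∫ ξ : ℝ × ℝ × ℝ, |f x ξ - f x₀ ξ|)
        (nhdsWithin x₀ (Ici 0)) (nhds 0)) ∧
    Tendsto (fun x => ∫ ξ : ℝ × ℝ × ℝ, |f x ξ - f_inf ξ|) atTop (nhds 0) := by
  have hfx : ∀ x, f x = Fc f_inf (φ x) := by
    intro x; rw [hf]; rfl
  have hφpos : ∀ x ∈ Ici (0:ℝ), 0 ≤ φ x := by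
    intro x hx
    refine le_of_tendsto hφlim ?_
    filter_upwards [eventually_ge_atTop x] with y hy
    exact hφanti.antitoneOn hx (le_trans hx hy : y ∈ Ici (0:ℝ)) hy
  refine ⟨?_, ?_, ?_⟩
  · intro x hx
    rw [hfx]
    exact integrable_Fc' f_inf hfint (hφpos x hx)
  · intro x₀ hx₀
    have hφtend : Tendsto φ (nhdsWithin x₀ (Ici 0)) (nhdsWithin (φ x₀) (Ici 0)) :=
      (hφcont x₀ hx₀).tendsto_nhdsWithin (fun x hx => hφpos x hx)
    have hcomp := (tendsto_Fc' f_inf hfint (hφpos x₀ hx₀)).comp hφtend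
    have heq : (fun x => ∫ ξ : ℝ × ℝ × ℝ, |f x ξ - f x₀ ξ|) =
        fun x => ∫ ξ : ℝ × ℝ × ℝ, |Fc f_inf (φ x) ξ - Fc f_inf (φ x₀) ξ| := by
      funext x
      rw [hfx x, hfx x₀]
    rw [heq]
    exact hcomp
  · have hφtend3 : Tendsto φ atTop (nhdsWithin 0 (Ici 0)) := by
      rw [tendsto_nhdsWithin_iff]
      refine ⟨hφlim, ?_⟩
      filter_upwards [eventually_ge_atTop (0:ℝ)] with y hy
      exact hφpos y hy
    have hcomp := (tendsto_Fc' f_inf hfint (le_refl (0:ℝ))).comp hφtend3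
    have heq : (fun x => ∫ ξ : ℝ × ℝ × ℝ, |f x ξ - f_inf ξ|) =
        fun x => ∫ ξ : ℝ × ℝ × ℝ, |Fc f_inf (φ x) ξ - Fc f_inf 0 ξ| := by
      funext x
      rw [hfx x]
      apply integral_congr_ae
      filter_upwards [Fc_zero_ae f_inf hfvan] with ξ he
      rw [he]
    rw [heq]
    exact hcomp
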